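/- Let d be a positive integer and let σ₁, σ₂, σ₃ be permutations of a set X of d elements such that σ₁ ∘ σ₂ ∘ σ₃ = id and the subgroup generated by σ₁, σ₂, σ₃ acts transitively on X. For a permutation σ, let c(σ) denote the number of orbits of the cyclic group generated by σ. Then c(σ₁) + c(σ₂) + c(σ₃) ≤ d + 2. -/

import Mathlib

/-- The number of orbits of the cyclic group generated by a permutation `σ`
(i.e., the number of cycles of `σ`, counting fixed points as cycles of length 1). -/
noncomputable def cycleCount {α : Type*} [Finite α] (σ : Equiv.Perm α) : ℕ :=
  Nat.card (MulAction.orbitRel.Quotient (Subgroup.zpowers σ) α)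

/-- The multiset of sizes of the orbits of the cyclic group generated by a permutation `σ`
(i.e., the cycle type of `σ`, with fixed points contributing parts equal to 1). -/
noncomputable def orbitSizes {α : Type*} [Finite α] (σ : Equiv.Perm α) : Multiset ℕ :=
  letI := Fintype.ofFinite (MulAction.orbitRel.Quotient (Subgroup.zpowers σ) α)
  (Finset.univ : Finset (MulAction.orbitRel.Quotient (Subgroup.zpowers σ) α)).val.map
    fun q => Nat.card q.orbit

open Equiv Equiv.Perm MulAction Subgroup
set_option linter.unusedSectionVars false

namespace ReeAux

variable {α : Type*}

lemma mem_orbit_sub {H : Subgroup (Perm α)} {x y : α} :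
    y ∈ MulAction.orbit H x ↔ ∃ g ∈ H, g x = y := by
  constructor
  · rintro ⟨⟨g, hg⟩, rfl⟩; exact ⟨g, hg, rfl⟩
  · rintro ⟨g, hg, rfl⟩; exact ⟨⟨g, hg⟩, rfl⟩

lemma apply_mem_orbit_sub {H : Subgroup (Perm α)} {g : Perm α} (hg : g ∈ H) (x : α) :
    g x ∈ MulAction.orbit H x :=
  mem_orbit_sub.mpr ⟨g, hg, rfl⟩

lemma orbit_symm {H : Subgroup (Perm α)} {x y : α} (h : y ∈ MulAction.orbit H x) :
    x ∈ MulAction.orbit H y :=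
  MulAction.mem_orbit_symm.mp h

lemma apply_mem_orbit_iff {H : Subgroup (Perm α)} {h : Perm α} (hh : h ∈ H) {z y : α} :
    h y ∈ MulAction.orbit H z ↔ y ∈ MulAction.orbit H z := by
  constructor
  · rintro hm
    obtain ⟨g, hg, hgz⟩ := mem_orbit_sub.mp hm
    refine mem_orbit_sub.mpr ⟨h⁻¹ * g, mul_mem (inv_mem hh) hg, ?_⟩
    simp [Perm.mul_apply, hgz]
  · rintro hm
    obtain ⟨g, hg, rfl⟩ := mem_orbit_sub.mp hm
    exact mem_orbit_sub.mpr ⟨h * g, mul_mem hh hg, rfl⟩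

/-- The subgroup of permutations preserving a set (as a set). -/
def setStab (s : Set α) : Subgroup (Perm α) where
  carrier := {g | ∀ y, g y ∈ s ↔ y ∈ s}
  one_mem' := by intro y; simp
  mul_mem' := by
    intro g h hg hh y
    have := hh y
    have := hg (h y)
    simpa [Perm.mul_apply] using (hg (h y)).trans (hh y)
  inv_mem' := by
    intro g hg y
    have := hg (g⁻¹ y)
    simpa using this.symm

lemma mem_setStab {s : Set α} {g : Perm α} : g ∈ setStab s ↔ ∀ y, g y ∈ s ↔ y ∈ s :=
  Iff.rfl

/-- The subgroup of permutations preserving every `H`-orbit. -/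
def orbPreserver (H : Subgroup (Perm α)) : Subgroup (Perm α) where
  carrier := {g | ∀ x, g x ∈ MulAction.orbit H x}
  one_mem' := fun x => MulAction.mem_orbit_self x
  mul_mem' := by
    intro g h hg hh x
    have h1 : MulAction.orbit H (h x) = MulAction.orbit H x :=
      MulAction.orbit_eq_iff.mpr (hh x)
    have h2 := hg (h x)
    rw [h1] at h2
    simpa [Perm.mul_apply] using h2
  inv_mem' := by
    intro g hg x
    have h1 := hg (g⁻¹ x)
    rw [show g (g⁻¹ x) = x from Equiv.apply_symm_apply g x] at h1
    exact orbit_symm h1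

lemma mem_orbPreserver {H : Subgroup (Perm α)} {g : Perm α} :
    g ∈ orbPreserver H ↔ ∀ x, g x ∈ MulAction.orbit H x := Iff.rfl


section Finite

variable [Finite α]

/-- The canonical map between orbit quotients. -/
def oMap (H G : Subgroup (Perm α))
    (h : ∀ x y : α, y ∈ MulAction.orbit H x → y ∈ MulAction.orbit G x) :
    orbitRel.Quotient H α → orbitRel.Quotient G α :=
  Quotient.map' id fun x y hxy => by
    have hx : x ∈ MulAction.orbit H y := hxy
    show (id x) ∈ MulAction.orbit G (id y)
    exact h y x hx

lemma oMap_mk (H G : Subgroup (Perm α))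
    (h : ∀ x y : α, y ∈ MulAction.orbit H x → y ∈ MulAction.orbit G x) (x : α) :
    oMap H G h (Quotient.mk'' x) = Quotient.mk'' x := rfl

lemma oMap_surjective (H G : Subgroup (Perm α))
    (h : ∀ x y : α, y ∈ MulAction.orbit H x → y ∈ MulAction.orbit G x) :
    Function.Surjective (oMap H G h) := by
  rintro ⟨x⟩
  exact ⟨Quotient.mk'' x, rfl⟩

/-- Cardinality of orbit-quotient decreases along inclusions of orbits. -/
lemma cardO_le (H G : Subgroup (Perm α))
    (h : ∀ x y : α, y ∈ MulAction.orbit H x → y ∈ MulAction.orbit G x) :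
    Nat.card (orbitRel.Quotient G α) ≤ Nat.card (orbitRel.Quotient H α) :=
  Nat.card_le_card_of_surjective _ (oMap_surjective H G h)

lemma cardO_lt (H G : Subgroup (Perm α))
    (h : ∀ x y : α, y ∈ MulAction.orbit H x → y ∈ MulAction.orbit G x)
    (a b : α) (hH : b ∉ MulAction.orbit H a) (hG : b ∈ MulAction.orbit G a) :
    Nat.card (orbitRel.Quotient G α) < Nat.card (orbitRel.Quotient H α) := by
  classical
  have hni : ¬ Function.Injective (oMap H G h) := by
    intro hinj
    have h1 : oMap H G h (Quotient.mk'' b) = oMap H G h (Quotient.mk'' a) :=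
      Quotient.sound' (MulAction.orbitRel_apply.mpr hG)
    have h2 := hinj h1
    exact hH (MulAction.orbitRel_apply.mp (Quotient.exact' h2))
  have := Fintype.ofFinite (orbitRel.Quotient H α)
  have := Fintype.ofFinite (orbitRel.Quotient G α)
  rw [Nat.card_eq_fintype_card, Nat.card_eq_fintype_card]
  exact Fintype.card_lt_of_surjective_not_injective _ (oMap_surjective H G h) hni

lemma cardO_eq_of_preserve (H G : Subgroup (Perm α)) (h1 : H ≤ G)
    (h2 : G ≤ orbPreserver H) :
    Nat.card (orbitRel.Quotient G α) = Nat.card (orbitRel.Quotient H α) := by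
  refine le_antisymm (cardO_le H G ?_) (cardO_le G H ?_)
  · intro x y hy
    obtain ⟨g, hg, rfl⟩ := mem_orbit_sub.mp hy
    exact apply_mem_orbit_sub (h1 hg) x
  · intro x y hy
    obtain ⟨g, hg, rfl⟩ := mem_orbit_sub.mp hy
    exact h2 hg x

lemma cardO_of_trivial (H : Subgroup (Perm α)) (h : ∀ g ∈ H, g = 1) :
    Nat.card (orbitRel.Quotient H α) = Nat.card α := by
  symm
  refine Nat.card_eq_of_bijective (Quotient.mk'' : α → orbitRel.Quotient H α) ⟨?_, ?_⟩
  · intro x y hxy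
    obtain ⟨g, hg, hgx⟩ := mem_orbit_sub.mp (MulAction.orbitRel_apply.mp (Quotient.exact' hxy))
    rw [h g hg] at hgx
    simpa using hgx.symm
  · rintro ⟨x⟩
    exact ⟨x, rfl⟩

omit [Finite α] in
lemma cardO_transitive (G : Subgroup (Perm α)) [Nonempty α]
    (h : ∀ x y : α, y ∈ MulAction.orbit G x) :
    Nat.card (orbitRel.Quotient G α) = 1 := by
  have hsub : Subsingleton (orbitRel.Quotient G α) := by
    constructor
    rintro ⟨x⟩ ⟨y⟩
    exact Quotient.sound' (MulAction.orbitRel_apply.mpr (h y x))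
  have hne : Nonempty (orbitRel.Quotient G α) := Nonempty.map Quotient.mk'' (by infer_instance)
  exact Nat.card_eq_one_iff_unique.mpr ⟨hsub, hne⟩

lemma cardO_le_card (H : Subgroup (Perm α)) :
    Nat.card (orbitRel.Quotient H α) ≤ Nat.card α :=
  Nat.card_le_card_of_surjective (Quotient.mk'' : α → orbitRel.Quotient H α)
    (by rintro ⟨x⟩; exact ⟨x, rfl⟩)

end Finite

section Swap

variable [Finite α] [DecidableEq α]

lemma orbit_mono' {H G : Subgroup (Perm α)} (hle : H ≤ G) {x : α} :
    MulAction.orbit H x ⊆ MulAction.orbit G x := by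
  intro y hy
  obtain ⟨g, hg, rfl⟩ := mem_orbit_sub.mp hy
  exact apply_mem_orbit_sub (hle hg) x

lemma orbit_closure_union_swap (H : Subgroup (Perm α)) (a b : α) (hab : a ≠ b)
    {G : Subgroup (Perm α)}
    (hG : G = Subgroup.closure ((H : Set (Perm α)) ∪ {Equiv.swap a b})) (x : α) :
    MulAction.orbit G x = MulAction.orbit H x ∨
      MulAction.orbit G x = MulAction.orbit H a ∪ MulAction.orbit H b := by
  have hHG : H ≤ G := by
    rw [hG]; exact fun g hg => Subgroup.subset_closure (Or.inl hg)
  have htG : Equiv.swap a b ∈ G := by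
    rw [hG]; exact Subgroup.subset_closure (Or.inr rfl)
  by_cases hx : x ∈ MulAction.orbit H a ∪ MulAction.orbit H b
  · right
    apply Set.Subset.antisymm
    · have hstab : G ≤ setStab (MulAction.orbit H a ∪ MulAction.orbit H b) := by
        rw [hG, Subgroup.closure_le]
        rintro g (hg | rfl)
        · replace hg : g ∈ H := hg
          intro y
          simp only [Set.mem_union, apply_mem_orbit_iff hg]
        · intro y
          rcases eq_or_ne y a with rfl | hya
          · rw [Equiv.swap_apply_left]
            exact iff_of_true (Or.inr (MulAction.mem_orbit_self _))
              (Or.inl (MulAction.mem_orbit_self _))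
          rcases eq_or_ne y b with rfl | hyb
          · rw [Equiv.swap_apply_right]
            exact iff_of_true (Or.inl (MulAction.mem_orbit_self _))
              (Or.inr (MulAction.mem_orbit_self _))
          · rw [Equiv.swap_apply_of_ne_of_ne hya hyb]
      intro y hy
      obtain ⟨g, hg, rfl⟩ := mem_orbit_sub.mp hy
      exact (hstab hg x).mpr hx
    · have hba : b ∈ MulAction.orbit G a :=
        mem_orbit_sub.mpr ⟨Equiv.swap a b, htG, Equiv.swap_apply_left a b⟩
      have hGx : MulAction.orbit G x = MulAction.orbit G a := by
        rcases hx with hx | hx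
        · exact MulAction.orbit_eq_iff.mpr (orbit_mono' hHG hx)
        · have hxa : x ∈ MulAction.orbit G a := by
            have : x ∈ MulAction.orbit G b := orbit_mono' hHG hx
            rw [MulAction.orbit_eq_iff.mpr hba] at this
            exact this
          exact MulAction.orbit_eq_iff.mpr hxa
      rw [hGx]
      rintro y (hy | hy)
      · exact orbit_mono' hHG hy
      · have : y ∈ MulAction.orbit G b := orbit_mono' hHG hy
        rw [MulAction.orbit_eq_iff.mpr hba] at this
        exact this
  · left
    apply Set.Subset.antisymm
    · have hstab : G ≤ setStab (MulAction.orbit H x) := by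
        rw [hG, Subgroup.closure_le]
        rintro g (hg | rfl)
        · replace hg : g ∈ H := hg
          intro y
          exact apply_mem_orbit_iff hg
        · intro y
          rcases eq_or_ne y a with rfl | hya
          · rw [Equiv.swap_apply_left]
            refine iff_of_false (fun hc => hx (Or.inr (orbit_symm hc)))
              (fun hc => hx (Or.inl (orbit_symm hc)))
          rcases eq_or_ne y b with rfl | hyb
          · rw [Equiv.swap_apply_right]
            refine iff_of_false (fun hc => hx (Or.inl (orbit_symm hc)))
              (fun hc => hx (Or.inr (orbit_symm hc)))
          · rw [Equiv.swap_apply_of_ne_of_ne hya hyb]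
      intro y hy
      obtain ⟨g, hg, rfl⟩ := mem_orbit_sub.mp hy
      exact (hstab hg x).mpr (MulAction.mem_orbit_self x)
    · exact orbit_mono' hHG

lemma cardO_union_swap_le (H : Subgroup (Perm α)) (a b : α) (hab : a ≠ b)
    {G : Subgroup (Perm α)}
    (hG : G = Subgroup.closure ((H : Set (Perm α)) ∪ {Equiv.swap a b})) :
    Nat.card (orbitRel.Quotient H α) ≤ Nat.card (orbitRel.Quotient G α) + 1 := by
  classical
  have hHG : H ≤ G := by
    rw [hG]; exact fun g hg => Subgroup.subset_closure (Or.inl hg)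
  have hmono : ∀ x y : α, y ∈ MulAction.orbit H x → y ∈ MulAction.orbit G x :=
    fun x y hy => orbit_mono' hHG hy
  set f : orbitRel.Quotient H α → (orbitRel.Quotient G α) ⊕ Unit := fun q =>
    if q = Quotient.mk'' a then Sum.inr () else Sum.inl (oMap H G hmono q) with hf
  have hinj : Function.Injective f := by
    intro q₁ q₂
    refine Quotient.inductionOn₂' q₁ q₂ (fun x y heq => ?_)
    by_cases h1 : (Quotient.mk'' x : orbitRel.Quotient H α) = Quotient.mk'' a <;>
      by_cases h2 : (Quotient.mk'' y : orbitRel.Quotient H α) = Quotient.mk'' a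
    · exact h1.trans h2.symm
    · simp only [hf, h1, h2, if_true, if_false, if_pos, if_neg, not_false_iff] at heq
      exact absurd heq (by simp)
    · simp only [hf, h1, h2] at heq
      exact absurd heq (by simp)
    · simp only [hf, h1, h2, if_neg, not_false_iff] at heq
      have heq2 : oMap H G hmono (Quotient.mk'' x) = oMap H G hmono (Quotient.mk'' y) :=
        Sum.inl.inj heq
      rw [oMap_mk, oMap_mk] at heq2
      have hxy : x ∈ MulAction.orbit G y := MulAction.orbitRel_apply.mp (Quotient.exact' heq2)
      rcases orbit_closure_union_swap H a b hab hG y with hcase | hcase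
      · rw [hcase] at hxy
        exact Quotient.sound' (MulAction.orbitRel_apply.mpr hxy)
      · have hyU : y ∈ MulAction.orbit H a ∪ MulAction.orbit H b := by
          rw [← hcase]; exact MulAction.mem_orbit_self y
        have hya : y ∉ MulAction.orbit H a := fun hc =>
          h2 (Quotient.sound' (MulAction.orbitRel_apply.mpr hc))
        have hyb : y ∈ MulAction.orbit H b := hyU.resolve_left hya
        have hxU : x ∈ MulAction.orbit H a ∪ MulAction.orbit H b := by
          rw [← hcase]; exact hxy
        have hxa : x ∉ MulAction.orbit H a := fun hc =>
          h1 (Quotient.sound' (MulAction.orbitRel_apply.mpr hc))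
        have hxb : x ∈ MulAction.orbit H b := hxU.resolve_left hxa
        have : x ∈ MulAction.orbit H y := by
          rw [MulAction.orbit_eq_iff.mpr hyb]
          exact hxb
        exact Quotient.sound' (MulAction.orbitRel_apply.mpr this)
  calc Nat.card (orbitRel.Quotient H α)
      ≤ Nat.card ((orbitRel.Quotient G α) ⊕ Unit) := Nat.card_le_card_of_injective f hinj
    _ = Nat.card (orbitRel.Quotient G α) + 1 := by simp [Nat.card_sum]

end Swap


section Key

variable [Finite α] [DecidableEq α]

lemma merge_orbit (σ : Perm α) (a b : α) (hab : a ≠ b)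
    (h : b ∉ MulAction.orbit (Subgroup.zpowers σ) a) :
    b ∈ MulAction.orbit (Subgroup.zpowers (σ * Equiv.swap a b)) a := by
  by_contra hτ
  set τ := σ * Equiv.swap a b with hτdef
  have hστ : ∀ x : α, x ≠ a → x ≠ b → σ x = τ x := fun x hxa hxb => by
    simp [hτdef, Perm.mul_apply, Equiv.swap_apply_of_ne_of_ne hxa hxb]
  have hσa : σ a = τ b := by simp [hτdef, Perm.mul_apply]
  have key : ∀ j : ℕ, (∀ i : ℕ, 1 ≤ i → i ≤ j → (σ ^ i) a ≠ b) → 1 ≤ j →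
      (σ ^ j) a ∈ MulAction.orbit (Subgroup.zpowers τ) b := by
    intro j
    induction j with
    | zero => intro _ h0; omega
    | succ j ih =>
      intro hne hj
      rcases Nat.eq_zero_or_pos j with rfl | hj1
      · rw [zero_add, pow_one, hσa]
        exact apply_mem_orbit_sub (Subgroup.mem_zpowers τ) b
      · have hx : (σ ^ j) a ∈ MulAction.orbit (Subgroup.zpowers τ) b :=
          ih (fun i h1 h2 => hne i h1 (Nat.le_succ_of_le h2)) hj1
        have hxb : (σ ^ j) a ≠ b := hne j hj1 (Nat.le_succ j)
        have hxa : (σ ^ j) a ≠ a := fun hc => hτ (orbit_symm (hc ▸ hx))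
        have hstep : (σ ^ (j + 1)) a = σ ((σ ^ j) a) := by
          rw [pow_succ' σ j]
          rfl
        rw [hstep, hστ _ hxa hxb]
        have horb : MulAction.orbit (Subgroup.zpowers τ) ((σ ^ j) a)
            = MulAction.orbit (Subgroup.zpowers τ) b := MulAction.orbit_eq_iff.mpr hx
        rw [← horb]
        exact apply_mem_orbit_sub (Subgroup.mem_zpowers τ) _
  rcases em (∃ i : ℕ, 1 ≤ i ∧ i ≤ orderOf σ ∧ (σ ^ i) a = b) with ⟨i, _, _, hi⟩ | hno
  · exact h (mem_orbit_sub.mpr ⟨σ ^ i, Subgroup.npow_mem_zpowers σ i, hi⟩)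
  · have hord : 1 ≤ orderOf σ := orderOf_pos σ
    have hfin := key (orderOf σ) (fun i h1 h2 hc => hno ⟨i, h1, h2, hc⟩) hord
    rw [pow_orderOf_eq_one σ] at hfin
    simp only [Perm.one_apply] at hfin
    exact hτ (orbit_symm hfin)

lemma cycleCount_mul_swap_le (σ : Perm α) (a b : α) (hab : a ≠ b) :
    cycleCount (σ * Equiv.swap a b) ≤ cycleCount σ + 1 := by
  set τ := σ * Equiv.swap a b with hτdef
  set G := Subgroup.closure ((Subgroup.zpowers τ : Set (Perm α)) ∪ {Equiv.swap a b}) with hGdef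
  have h1 : cycleCount τ ≤ Nat.card (orbitRel.Quotient G α) + 1 :=
    cardO_union_swap_le (Subgroup.zpowers τ) a b hab hGdef
  have hτG : τ ∈ G := Subgroup.subset_closure (Or.inl (Subgroup.mem_zpowers τ))
  have htG : Equiv.swap a b ∈ G := Subgroup.subset_closure (Or.inr rfl)
  have hσG : σ ∈ G := by
    have hστ : σ = τ * Equiv.swap a b := by
      rw [hτdef, mul_assoc, Equiv.swap_mul_self, mul_one]
    rw [hστ]
    exact mul_mem hτG htG
  have h2 : Nat.card (orbitRel.Quotient G α) ≤ cycleCount σ :=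
    cardO_le (Subgroup.zpowers σ) G
      (fun x y hy => orbit_mono' (Subgroup.zpowers_le.mpr hσG) hy)
  have e1 : cycleCount τ = Nat.card (orbitRel.Quotient (Subgroup.zpowers τ) α) := rfl
  omega

lemma cycleCount_mul_swap_lt (σ : Perm α) (a b : α) (hab : a ≠ b)
    (h : b ∉ MulAction.orbit (Subgroup.zpowers σ) a) :
    cycleCount (σ * Equiv.swap a b) + 1 ≤ cycleCount σ := by
  set τ := σ * Equiv.swap a b with hτdef
  have hbτ : b ∈ MulAction.orbit (Subgroup.zpowers τ) a := merge_orbit σ a b hab h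
  have haτ : a ∈ MulAction.orbit (Subgroup.zpowers τ) b := orbit_symm hbτ
  set G := Subgroup.closure ((Subgroup.zpowers τ : Set (Perm α)) ∪ {Equiv.swap a b}) with hGdef
  have hτG : τ ∈ G := Subgroup.subset_closure (Or.inl (Subgroup.mem_zpowers τ))
  have htG : Equiv.swap a b ∈ G := Subgroup.subset_closure (Or.inr rfl)
  have hσG : σ ∈ G := by
    have hστ : σ = τ * Equiv.swap a b := by
      rw [hτdef, mul_assoc, Equiv.swap_mul_self, mul_one]
    rw [hστ]
    exact mul_mem hτG htG
  have heq : Nat.card (orbitRel.Quotient G α) = cycleCount τ := by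
    refine cardO_eq_of_preserve (Subgroup.zpowers τ) G
      (Subgroup.zpowers_le.mpr hτG) ?_
    rw [hGdef, Subgroup.closure_le]
    rintro g (hg | rfl)
    · replace hg : g ∈ Subgroup.zpowers τ := hg
      intro x
      exact apply_mem_orbit_sub hg x
    · intro x
      rcases eq_or_ne x a with rfl | hxa
      · rw [Equiv.swap_apply_left]; exact hbτ
      rcases eq_or_ne x b with rfl | hxb
      · rw [Equiv.swap_apply_right]; exact haτ
      · rw [Equiv.swap_apply_of_ne_of_ne hxa hxb]
        exact MulAction.mem_orbit_self x
  have hlt : Nat.card (orbitRel.Quotient G α) < cycleCount σ := by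
    refine cardO_lt (Subgroup.zpowers σ) G
      (fun x y hy => orbit_mono' (Subgroup.zpowers_le.mpr hσG) hy) a b h ?_
    exact mem_orbit_sub.mpr ⟨Equiv.swap a b, htG, Equiv.swap_apply_left a b⟩
  omega

end Key


section Factor

variable [Finite α] [DecidableEq α]

lemma cycleCount_lt_card {σ : Perm α} {a : α} (ha : σ a ≠ a) :
    cycleCount σ < Nat.card α := by
  classical
  have hsur : Function.Surjective
      (Quotient.mk'' : α → orbitRel.Quotient (Subgroup.zpowers σ) α) := by
    rintro ⟨x⟩; exact ⟨x, rfl⟩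
  have hni : ¬ Function.Injective
      (Quotient.mk'' : α → orbitRel.Quotient (Subgroup.zpowers σ) α) := by
    intro hinj
    apply ha
    apply hinj
    exact Quotient.sound'
      (MulAction.orbitRel_apply.mpr (apply_mem_orbit_sub (Subgroup.mem_zpowers σ) a))
  have := Fintype.ofFinite α
  have := Fintype.ofFinite (orbitRel.Quotient (Subgroup.zpowers σ) α)
  show Nat.card (orbitRel.Quotient (Subgroup.zpowers σ) α) < Nat.card α
  rw [Nat.card_eq_fintype_card, Nat.card_eq_fintype_card]
  exact Fintype.card_lt_of_surjective_not_injective _ hsur hni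

lemma cycleCount_one : cycleCount (1 : Perm α) = Nat.card α := by
  apply cardO_of_trivial
  intro g hg
  obtain ⟨k, rfl⟩ := Subgroup.mem_zpowers_iff.mp hg
  simp

lemma exists_swap_list (σ : Perm α) :
    ∃ L : List (Perm α), (∀ t ∈ L, ∃ a b : α, a ≠ b ∧ t = Equiv.swap a b) ∧
      L.prod = σ ∧ L.length + cycleCount σ ≤ Nat.card α := by
  classical
  suffices H : ∀ (n : ℕ) (σ : Perm α), Nat.card α - cycleCount σ ≤ n →
      ∃ L : List (Perm α), (∀ t ∈ L, ∃ a b : α, a ≠ b ∧ t = Equiv.swap a b) ∧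
        L.prod = σ ∧ L.length + cycleCount σ ≤ Nat.card α by
    exact H _ σ le_rfl
  intro n
  induction n with
  | zero =>
    intro σ hσ
    have hone : σ = 1 := by
      by_contra hne
      obtain ⟨a, ha⟩ : ∃ a, σ a ≠ a := by
        by_contra hall
        push_neg at hall
        exact hne (Equiv.ext hall)
      have := cycleCount_lt_card ha
      omega
    subst hone
    exact ⟨[], by simp, by simp, by simp [cycleCount_one]⟩
  | succ n ih =>
    intro σ hσ
    by_cases hone : σ = 1
    · subst hone
      exact ⟨[], by simp, by simp, by simp [cycleCount_one]⟩
    · obtain ⟨a, ha⟩ : ∃ a, σ a ≠ a := by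
        by_contra hall
        push_neg at hall
        exact hone (Equiv.ext hall)
      set b := σ⁻¹ a with hbdef
      have hσb : σ b = a := by rw [hbdef]; exact Equiv.apply_symm_apply σ a
      have hba : b ≠ a := by
        intro hc
        rw [hc] at hσb
        exact ha hσb
      have hab : a ≠ b := hba.symm
      set τ := σ * Equiv.swap a b with hτdef
      have hτa : τ a = a := by
        rw [hτdef]
        simp only [Perm.mul_apply, Equiv.swap_apply_left]
        exact hσb
      have hts : τ * Equiv.swap a b = σ := by
        rw [hτdef, mul_assoc, Equiv.swap_mul_self, mul_one]
      have hnot : b ∉ MulAction.orbit (Subgroup.zpowers τ) a := by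
        intro hmem
        obtain ⟨g, hg, hga⟩ := mem_orbit_sub.mp hmem
        obtain ⟨k, rfl⟩ := Subgroup.mem_zpowers_iff.mp hg
        rw [Equiv.Perm.zpow_apply_eq_self_of_apply_eq_self hτa k] at hga
        exact hba hga.symm
      have hinc : cycleCount σ + 1 ≤ cycleCount τ := by
        have h2 := cycleCount_mul_swap_lt τ a b hab hnot
        rwa [hts] at h2
      have hcard : cycleCount τ ≤ Nat.card α := cardO_le_card _
      obtain ⟨L, hL1, hL2, hL3⟩ := ih τ (by omega)
      refine ⟨L ++ [Equiv.swap a b], ?_, ?_, ?_⟩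
      · intro t ht
        rcases List.mem_append.mp ht with h | h
        · exact hL1 t h
        · rw [List.mem_singleton.mp h]
          exact ⟨a, b, hab, rfl⟩
      · rw [List.prod_append, List.prod_singleton, hL2, hts]
      · rw [List.length_append, List.length_singleton]
        omega

lemma main_bound (L : List (Perm α))
    (hL : ∀ t ∈ L, ∃ a b : α, a ≠ b ∧ t = Equiv.swap a b) :
    Nat.card α + cycleCount L.prod ≤
      L.length + 2 * Nat.card (orbitRel.Quotient (Subgroup.closure {g | g ∈ L}) α) := by
  classical
  induction L using List.reverseRecOn with
  | nil =>
    have h2 : Nat.card (orbitRel.Quotient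
        (Subgroup.closure {g | g ∈ ([] : List (Perm α))}) α) = Nat.card α := by
      apply cardO_of_trivial
      intro g hg
      have hempty : {g | g ∈ ([] : List (Perm α))} = (∅ : Set (Perm α)) := by
        ext g; simp
      rw [hempty, Subgroup.closure_empty] at hg
      exact hg
    rw [List.prod_nil, cycleCount_one, h2, List.length_nil]
    omega
  | append_singleton L t ih =>
    obtain ⟨a, b, hab, rfl⟩ :=
      hL t (List.mem_append.mpr (Or.inr (List.mem_singleton_self t)))
    have hLsub : ∀ s ∈ L, ∃ a b : α, a ≠ b ∧ s = Equiv.swap a b :=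
      fun s hs => hL s (List.mem_append.mpr (Or.inl hs))
    have ihL := ih hLsub
    have hsets : {g | g ∈ L ++ [Equiv.swap a b]} = {g | g ∈ L} ∪ {Equiv.swap a b} := by
      ext g; simp [List.mem_append, or_comm]
    have hG'eq : Subgroup.closure {g | g ∈ L ++ [Equiv.swap a b]}
        = Subgroup.closure ((Subgroup.closure {g | g ∈ L} : Set (Perm α))
            ∪ {Equiv.swap a b}) := by
      rw [hsets, Subgroup.closure_union, Subgroup.closure_union, Subgroup.closure_eq]
    have hGG' : Subgroup.closure {g | g ∈ L} ≤ Subgroup.closure {g | g ∈ L ++ [Equiv.swap a b]} := by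
      apply Subgroup.closure_mono
      rw [hsets]
      exact Set.subset_union_left
    have htG' : Equiv.swap a b ∈ Subgroup.closure {g | g ∈ L ++ [Equiv.swap a b]} := by
      apply Subgroup.subset_closure
      rw [hsets]
      exact Or.inr rfl
    have hπG : L.prod ∈ Subgroup.closure {g | g ∈ L} :=
      Subgroup.list_prod_mem _ (fun x hx => Subgroup.subset_closure hx)
    rw [List.prod_append, List.prod_singleton, List.length_append, List.length_singleton]
    by_cases hcase : b ∈ MulAction.orbit (Subgroup.closure {g | g ∈ L}) a
    · have hm' : Nat.card (orbitRel.Quotient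
          (Subgroup.closure {g | g ∈ L ++ [Equiv.swap a b]}) α)
          = Nat.card (orbitRel.Quotient (Subgroup.closure {g | g ∈ L}) α) := by
        apply cardO_eq_of_preserve _ _ hGG'
        rw [hG'eq, Subgroup.closure_le]
        rintro g (hg | rfl)
        · replace hg : g ∈ Subgroup.closure {g | g ∈ L} := hg
          intro x
          exact apply_mem_orbit_sub hg x
        · intro x
          rcases eq_or_ne x a with rfl | hxa
          · rw [Equiv.swap_apply_left]; exact hcase
          rcases eq_or_ne x b with rfl | hxb
          · rw [Equiv.swap_apply_right]; exact orbit_symm hcase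
          · rw [Equiv.swap_apply_of_ne_of_ne hxa hxb]
            exact MulAction.mem_orbit_self x
      have hP1 : cycleCount (L.prod * Equiv.swap a b) ≤ cycleCount L.prod + 1 :=
        cycleCount_mul_swap_le L.prod a b hab
      omega
    · have hK1 : Nat.card (orbitRel.Quotient (Subgroup.closure {g | g ∈ L}) α)
          ≤ Nat.card (orbitRel.Quotient
            (Subgroup.closure {g | g ∈ L ++ [Equiv.swap a b]}) α) + 1 :=
        cardO_union_swap_le _ a b hab hG'eq
      have hb : b ∉ MulAction.orbit (Subgroup.zpowers L.prod) a := fun hc =>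
        hcase (orbit_mono' (Subgroup.zpowers_le.mpr hπG) hc)
      have hP2 : cycleCount (L.prod * Equiv.swap a b) + 1 ≤ cycleCount L.prod :=
        cycleCount_mul_swap_lt L.prod a b hab hb
      omega

end Factor


end ReeAux

/-- Riemann–Hurwitz inequality (Ree's inequality): if `σ₁ ∘ σ₂ ∘ σ₃ = id` on a set of `d`
elements and the subgroup generated by `σ₁, σ₂, σ₃` acts transitively, then
`c(σ₁) + c(σ₂) + c(σ₃) ≤ d + 2`. -/
theorem ree_inequality (d : ℕ) (hd : 0 < d) (σ₁ σ₂ σ₃ : Equiv.Perm (Fin d))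
    (hprod : σ₁ * σ₂ * σ₃ = 1)
    (htrans : ∀ x y : Fin d,
      ∃ g ∈ Subgroup.closure ({σ₁, σ₂, σ₃} : Set (Equiv.Perm (Fin d))), g x = y) :
    cycleCount σ₁ + cycleCount σ₂ + cycleCount σ₃ ≤ d + 2 := by
  classical
  haveI : Nonempty (Fin d) := ⟨⟨0, hd⟩⟩
  obtain ⟨L₁, h11, h12, h13⟩ := ReeAux.exists_swap_list σ₁
  obtain ⟨L₂, h21, h22, h23⟩ := ReeAux.exists_swap_list σ₂
  obtain ⟨L₃, h31, h32, h33⟩ := ReeAux.exists_swap_list σ₃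
  set L : List (Equiv.Perm (Fin d)) := L₁ ++ (L₂ ++ L₃) with hLdef
  have hLswaps : ∀ t ∈ L, ∃ a b : Fin d, a ≠ b ∧ t = Equiv.swap a b := by
    intro t ht
    rcases List.mem_append.mp ht with h | h
    · exact h11 t h
    rcases List.mem_append.mp h with h | h
    · exact h21 t h
    · exact h31 t h
  have hprodL : L.prod = 1 := by
    rw [hLdef, List.prod_append, List.prod_append, h12, h22, h32, ← mul_assoc, hprod]
  have hM := ReeAux.main_bound L hLswaps
  rw [hprodL, ReeAux.cycleCount_one] at hM
  have h1mem : σ₁ ∈ Subgroup.closure {g | g ∈ L} := by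
    rw [← h12]
    exact Subgroup.list_prod_mem _ (fun x hx =>
      Subgroup.subset_closure (List.mem_append.mpr (Or.inl hx)))
  have h2mem : σ₂ ∈ Subgroup.closure {g | g ∈ L} := by
    rw [← h22]
    exact Subgroup.list_prod_mem _ (fun x hx =>
      Subgroup.subset_closure (List.mem_append.mpr (Or.inr (List.mem_append.mpr (Or.inl hx)))))
  have h3mem : σ₃ ∈ Subgroup.closure {g | g ∈ L} := by
    rw [← h32]
    exact Subgroup.list_prod_mem _ (fun x hx =>
      Subgroup.subset_closure (List.mem_append.mpr (Or.inr (List.mem_append.mpr (Or.inr hx)))))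
  have hclos : Subgroup.closure ({σ₁, σ₂, σ₃} : Set (Equiv.Perm (Fin d)))
      ≤ Subgroup.closure {g | g ∈ L} := by
    rw [Subgroup.closure_le]
    intro g hg
    rcases hg with rfl | rfl | rfl
    · exact h1mem
    · exact h2mem
    · exact h3mem
  have htrans' : ∀ x y : Fin d, y ∈ MulAction.orbit (Subgroup.closure {g | g ∈ L}) x := by
    intro x y
    obtain ⟨g, hg, hgx⟩ := htrans x y
    exact ReeAux.mem_orbit_sub.mpr ⟨g, hclos hg, hgx⟩
  have hone : Nat.card (MulAction.orbitRel.Quotient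
      (Subgroup.closure {g | g ∈ L}) (Fin d)) = 1 :=
    ReeAux.cardO_transitive _ htrans'
  rw [hone] at hM
  have hcard : Nat.card (Fin d) = d := by simp
  rw [hcard] at hM h13 h23 h33
  have hlen : L.length = L₁.length + (L₂.length + L₃.length) := by
    rw [hLdef, List.length_append, List.length_append]
  omega
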